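/- Let p_LL(β|ψ₁,ψ₂) be the marginal density of β when β|λ ~ N(0,λ²) and λ has the log-Laplace prior with left scale ψ₁ and right scale ψ₂. If ψ₁ > 1 then p_LL(β|ψ₁,ψ₂) = O(|β|^{−1+1/ψ₁}) as |β| → 0; if ψ₁ = 1 then p_LL(β|ψ₁,ψ₂) = O(−log|β|) as |β| → 0; and if ψ₁ < 1 then p_LL(β|ψ₁,ψ₂) = O(1) as |β| → 0, in all cases for any ψ₂ > 0. -/

import Mathlib

open MeasureTheory Real Set Filter

/-- Marginal density of β for a N(0,λ²) kernel under the log-Laplace prior. -/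
noncomputable def logLaplaceMarginal (ψ₁ ψ₂ β : ℝ) : ℝ :=
  ∫ l in Ioi (0 : ℝ),
    (2 * π * l ^ 2) ^ (-(1 : ℝ) / 2) * Real.exp (-β ^ 2 / (2 * l ^ 2)) *
      (if l ≤ 1 then (1 / (2 * ψ₁)) * l ^ (-1 + 1 / ψ₁)
       else (1 / (2 * ψ₂)) * l ^ (-1 - 1 / ψ₂))

namespace LLaux

lemma exp_neg_le_inv {x : ℝ} (hx : 0 < x) : Real.exp (-x) ≤ x⁻¹ := by
  rw [Real.exp_neg]
  have hxe : x ≤ Real.exp x := by linarith [Real.add_one_le_exp x]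
  exact inv_anti₀ hx hxe

lemma gauss_factor_le {l : ℝ} (hl : 0 < l) :
    (2 * π * l ^ 2) ^ (-(1 : ℝ) / 2) ≤ l⁻¹ := by
  have h1 : l ^ 2 ≤ 2 * π * l ^ 2 := by nlinarith [Real.pi_gt_three, sq_nonneg l]
  have h2 : (2 * π * l ^ 2) ^ (-(1 : ℝ) / 2) ≤ (l ^ 2) ^ (-(1 : ℝ) / 2) :=
    Real.rpow_le_rpow_of_nonpos (by positivity) h1 (by norm_num)
  have h3 : ((l ^ 2 : ℝ)) ^ (-(1 : ℝ) / 2) = l⁻¹ := by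
    rw [← Real.rpow_natCast l 2, ← Real.rpow_mul hl.le]
    norm_num [Real.rpow_neg_one]
  linarith [h2, h3.le]

lemma rpow_merge {l : ℝ} (hl : 0 < l) (a b : ℝ) : l ^ a * l ^ b = l ^ (a + b) :=
  (Real.rpow_add hl a b).symm

lemma integrand_nonneg (ψ₁ ψ₂ β : ℝ) (h₁ : 0 < ψ₁) (h₂ : 0 < ψ₂) {l : ℝ} (hl : 0 < l) :
    0 ≤ (2 * π * l ^ 2) ^ (-(1 : ℝ) / 2) * Real.exp (-β ^ 2 / (2 * l ^ 2)) *
      (if l ≤ 1 then (1 / (2 * ψ₁)) * l ^ (-1 + 1 / ψ₁)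
       else (1 / (2 * ψ₂)) * l ^ (-1 - 1 / ψ₂)) := by
  have h := Real.pi_pos
  apply mul_nonneg (mul_nonneg (by positivity) (Real.exp_pos _).le)
  split_ifs <;> positivity

lemma marginal_nonneg (ψ₁ ψ₂ β : ℝ) (h₁ : 0 < ψ₁) (h₂ : 0 < ψ₂) :
    0 ≤ logLaplaceMarginal ψ₁ ψ₂ β :=
  setIntegral_nonneg measurableSet_Ioi fun _ hl => integrand_nonneg ψ₁ ψ₂ β h₁ h₂ hl

/-- Splitting helpers for real powers. -/
lemma mul_rpow_shift {l : ℝ} (hl : 0 < l) (c : ℝ) : l * l ^ (-1 + c) = l ^ c := by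
  have h := Real.rpow_add hl 1 (-1 + c)
  rw [Real.rpow_one] at h
  rw [← h]; congr 1; ring

lemma inv_mul_rpow_shift {l : ℝ} (hl : 0 < l) (c : ℝ) : l⁻¹ * l ^ (-1 + c) = l ^ (-2 + c) := by
  have h := Real.rpow_add hl (-1) (-1 + c)
  rw [Real.rpow_neg_one] at h
  rw [← h]; congr 1; ring

lemma inv_mul_rpow_shift' {l : ℝ} (hl : 0 < l) (c : ℝ) : l⁻¹ * l ^ (-1 - c) = l ^ (-2 - c) := by
  have h := Real.rpow_add hl (-1) (-1 - c)
  rw [Real.rpow_neg_one] at h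
  rw [← h]; congr 1; ring

/-- Master bound: for 0 < |β| ≤ 1 the marginal is bounded by three explicit terms. -/
lemma marginal_bound (ψ₁ ψ₂ β : ℝ) (h₁ : 0 < ψ₁) (h₂ : 0 < ψ₂)
    (hβ : β ≠ 0) (hb1 : |β| ≤ 1) :
    logLaplaceMarginal ψ₁ ψ₂ β ≤
      (1 / ψ₁) * |β| ^ (-1 + 1 / ψ₁)
        + (1 / (2 * ψ₁)) * (∫ l in Ioc |β| 1, l ^ (-2 + 1 / ψ₁)) + 1 / 2 := by
  have hb : 0 < |β| := abs_pos.2 hβ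
  set H : ℝ → ℝ := fun l =>
    if l ≤ |β| then (1 / ψ₁) * (β ^ 2)⁻¹ * l ^ (1 / ψ₁)
    else if l ≤ 1 then (1 / (2 * ψ₁)) * l ^ (-2 + 1 / ψ₁)
    else (1 / (2 * ψ₂)) * l ^ (-2 - 1 / ψ₂) with hHdef
  -- pointwise bound
  have hpt : ∀ l ∈ Ioi (0 : ℝ),
      (2 * π * l ^ 2) ^ (-(1 : ℝ) / 2) * Real.exp (-β ^ 2 / (2 * l ^ 2)) *
        (if l ≤ 1 then (1 / (2 * ψ₁)) * l ^ (-1 + 1 / ψ₁)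
         else (1 / (2 * ψ₂)) * l ^ (-1 - 1 / ψ₂)) ≤ H l := by
    intro l hl
    rw [mem_Ioi] at hl
    have hg := gauss_factor_le hl
    have hgn : (0:ℝ) ≤ (2 * π * l ^ 2) ^ (-(1 : ℝ) / 2) := by positivity
    have hexp1 : Real.exp (-β ^ 2 / (2 * l ^ 2)) ≤ 1 := by
      rw [Real.exp_le_one_iff]
      have : (0:ℝ) < 2 * l ^ 2 := by positivity
      apply div_nonpos_of_nonpos_of_nonneg (by nlinarith [sq_nonneg β]) this.le
    simp only [hHdef]
    by_cases hlb : l ≤ |β|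
    · -- small l: use exp(-x) ≤ x⁻¹
      have hl1 : l ≤ 1 := le_trans hlb hb1
      rw [if_pos hl1, if_pos hlb]
      have hx : (0:ℝ) < β ^ 2 / (2 * l ^ 2) := by positivity
      have hexp2 : Real.exp (-β ^ 2 / (2 * l ^ 2)) ≤ 2 * l ^ 2 / β ^ 2 := by
        have h' := exp_neg_le_inv hx
        rw [← neg_div, inv_div] at h'
        exact h'
      have hprior : (0:ℝ) ≤ (1 / (2 * ψ₁)) * l ^ (-1 + 1 / ψ₁) := by positivity
      calc (2 * π * l ^ 2) ^ (-(1 : ℝ) / 2) * Real.exp (-β ^ 2 / (2 * l ^ 2)) *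
            ((1 / (2 * ψ₁)) * l ^ (-1 + 1 / ψ₁))
          ≤ l⁻¹ * (2 * l ^ 2 / β ^ 2) * ((1 / (2 * ψ₁)) * l ^ (-1 + 1 / ψ₁)) := by
            apply mul_le_mul _ le_rfl hprior (by positivity)
            exact mul_le_mul hg hexp2 (Real.exp_pos _).le (by positivity)
        _ = (1 / ψ₁) * (β ^ 2)⁻¹ * (l * l ^ (-1 + 1 / ψ₁)) := by
            field_simp
        _ = (1 / ψ₁) * (β ^ 2)⁻¹ * l ^ (1 / ψ₁) := by rw [mul_rpow_shift hl]
    · rw [if_neg hlb]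
      by_cases hl1 : l ≤ 1
      · rw [if_pos hl1, if_pos hl1]
        calc (2 * π * l ^ 2) ^ (-(1 : ℝ) / 2) * Real.exp (-β ^ 2 / (2 * l ^ 2)) *
              ((1 / (2 * ψ₁)) * l ^ (-1 + 1 / ψ₁))
            ≤ l⁻¹ * 1 * ((1 / (2 * ψ₁)) * l ^ (-1 + 1 / ψ₁)) := by
              apply mul_le_mul _ le_rfl (by positivity) (by positivity)
              exact mul_le_mul hg hexp1 (Real.exp_pos _).le (by positivity)
          _ = (1 / (2 * ψ₁)) * (l⁻¹ * l ^ (-1 + 1 / ψ₁)) := by ring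
          _ = (1 / (2 * ψ₁)) * l ^ (-2 + 1 / ψ₁) := by rw [inv_mul_rpow_shift hl]
      · rw [if_neg hl1, if_neg hl1]
        calc (2 * π * l ^ 2) ^ (-(1 : ℝ) / 2) * Real.exp (-β ^ 2 / (2 * l ^ 2)) *
              ((1 / (2 * ψ₂)) * l ^ (-1 - 1 / ψ₂))
            ≤ l⁻¹ * 1 * ((1 / (2 * ψ₂)) * l ^ (-1 - 1 / ψ₂)) := by
              apply mul_le_mul _ le_rfl (by positivity) (by positivity)
              exact mul_le_mul hg hexp1 (Real.exp_pos _).le (by positivity)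
          _ = (1 / (2 * ψ₂)) * (l⁻¹ * l ^ (-1 - 1 / ψ₂)) := by ring
          _ = (1 / (2 * ψ₂)) * l ^ (-2 - 1 / ψ₂) := by rw [inv_mul_rpow_shift' hl]
  -- integrability of H on the three pieces
  have hmeas1 : MeasurableSet (Ioc (0:ℝ) |β|) := measurableSet_Ioc
  have hmeas2 : MeasurableSet (Ioc |β| (1:ℝ)) := measurableSet_Ioc
  have heq1 : EqOn (fun l : ℝ => (1 / ψ₁) * (β ^ 2)⁻¹ * l ^ (1 / ψ₁)) H (Ioc 0 |β|) := by
    intro l hl; simp only [hHdef, if_pos hl.2]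
  have heq2 : EqOn (fun l : ℝ => (1 / (2 * ψ₁)) * l ^ (-2 + 1 / ψ₁)) H (Ioc |β| 1) := by
    intro l hl; simp only [hHdef, if_neg (not_le.2 hl.1), if_pos hl.2]
  have heq3 : EqOn (fun l : ℝ => (1 / (2 * ψ₂)) * l ^ (-2 - 1 / ψ₂)) H (Ioi 1) := by
    intro l hl
    rw [mem_Ioi] at hl
    simp only [hHdef, if_neg (not_le.2 (lt_of_le_of_lt hb1 hl)), if_neg (not_le.2 hl)]
  have hI1 : IntegrableOn H (Ioc 0 |β|) := by
    refine IntegrableOn.congr_fun ?_ heq1 hmeas1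
    have h0 : (0:ℝ) < 1 / ψ₁ := by positivity
    exact (((intervalIntegral.intervalIntegrable_rpow'
      (by linarith : (-1:ℝ) < 1 / ψ₁)).1).const_mul _)
  have hI2 : IntegrableOn H (Ioc |β| 1) := by
    refine IntegrableOn.congr_fun ?_ heq2 hmeas2
    refine IntegrableOn.mono_set ?_ Ioc_subset_Icc_self
    apply ContinuousOn.integrableOn_Icc
    refine continuousOn_const.mul (ContinuousOn.rpow_const continuousOn_id fun x hx => ?_)
    exact Or.inl (ne_of_gt (lt_of_lt_of_le hb hx.1))
  have hI3 : IntegrableOn H (Ioi 1) := by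
    refine IntegrableOn.congr_fun ?_ heq3 measurableSet_Ioi
    refine (integrableOn_Ioi_rpow_of_lt ?_ one_pos).const_mul _
    have : (0:ℝ) < 1 / ψ₂ := by positivity
    linarith
  have e1 : Ioc (0:ℝ) |β| ∪ Ioc |β| 1 = Ioc 0 1 := Ioc_union_Ioc_eq_Ioc hb.le hb1
  have e2 : Ioc (0:ℝ) 1 ∪ Ioi 1 = Ioi 0 := Ioc_union_Ioi_eq_Ioi zero_lt_one.le
  have hIH : IntegrableOn H (Ioi 0) := by
    rw [← e2, ← e1]; exact (hI1.union hI2).union hI3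
  -- marginal ≤ ∫ H
  have step1 : logLaplaceMarginal ψ₁ ψ₂ β ≤ ∫ l in Ioi (0:ℝ), H l := by
    rw [logLaplaceMarginal]
    refine integral_mono_of_nonneg ?_ hIH ?_
    · exact (ae_restrict_iff' measurableSet_Ioi).2
        (ae_of_all _ fun l hl => integrand_nonneg ψ₁ ψ₂ β h₁ h₂ hl)
    · exact (ae_restrict_iff' measurableSet_Ioi).2 (ae_of_all _ hpt)
  -- split ∫ H
  have hdisj1 : Disjoint (Ioc (0:ℝ) |β|) (Ioc |β| 1) := Ioc_disjoint_Ioc_of_le le_rfl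
  have hdisj2 : Disjoint (Ioc (0:ℝ) 1) (Ioi 1) := by
    rw [Set.disjoint_left]; exact fun x hx hx' => absurd hx.2 (not_le.2 hx')
  have split : (∫ l in Ioi (0:ℝ), H l) =
      (∫ l in Ioc (0:ℝ) |β|, H l) + (∫ l in Ioc |β| 1, H l) + (∫ l in Ioi (1:ℝ), H l) := by
    rw [← e2, setIntegral_union hdisj2 measurableSet_Ioi (by rw [← e1]; exact hI1.union hI2) hI3,
      ← e1, setIntegral_union hdisj1 hmeas2 hI1 hI2]
  -- evaluate / bound the three pieces
  have piece1 : (∫ l in Ioc (0:ℝ) |β|, H l) ≤ (1 / ψ₁) * |β| ^ (-1 + 1 / ψ₁) := by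
    rw [← setIntegral_congr_fun hmeas1 heq1, integral_const_mul,
      ← intervalIntegral.integral_of_le hb.le,
      integral_rpow (Or.inl (by
        have h0 : (0:ℝ) < 1 / ψ₁ := by positivity
        linarith : (-1:ℝ) < 1 / ψ₁)),
      Real.zero_rpow (by positivity : 1 / ψ₁ + 1 ≠ 0)]
    have hβ2 : (β ^ 2)⁻¹ * |β| ^ (1 / ψ₁ + 1) = |β| ^ (-1 + 1 / ψ₁) := by
      rw [← sq_abs β, show ((|β|:ℝ) ^ 2) = |β| ^ (2:ℝ) by
          rw [← Real.rpow_natCast |β| 2]; norm_num,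
        ← Real.rpow_neg (abs_nonneg β), ← Real.rpow_add hb]
      congr 1; ring
    have hd : (0:ℝ) < 1 / ψ₁ + 1 := by positivity
    calc (1 / ψ₁) * (β ^ 2)⁻¹ * ((|β| ^ (1 / ψ₁ + 1) - 0) / (1 / ψ₁ + 1))
        = (1 / ψ₁) * (((β ^ 2)⁻¹ * |β| ^ (1 / ψ₁ + 1)) / (1 / ψ₁ + 1)) := by ring
      _ = (1 / ψ₁) * (|β| ^ (-1 + 1 / ψ₁) / (1 / ψ₁ + 1)) := by rw [hβ2]
      _ ≤ (1 / ψ₁) * |β| ^ (-1 + 1 / ψ₁) := by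
          apply mul_le_mul_of_nonneg_left _ (by positivity)
          exact div_le_self (by positivity) (by linarith [show (0:ℝ) < 1/ψ₁ by positivity])
  have piece2 : (∫ l in Ioc |β| 1, H l)
      = (1 / (2 * ψ₁)) * (∫ l in Ioc |β| 1, l ^ (-2 + 1 / ψ₁)) := by
    rw [← setIntegral_congr_fun hmeas2 heq2, integral_const_mul]
  have piece3 : (∫ l in Ioi (1:ℝ), H l) ≤ 1 / 2 := by
    rw [← setIntegral_congr_fun measurableSet_Ioi heq3, integral_const_mul,
      integral_Ioi_rpow_of_lt
        (by linarith [show (0:ℝ) < 1 / ψ₂ by positivity] : (-2 - 1 / ψ₂ : ℝ) < -1) one_pos,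
      Real.one_rpow]
    have ht1 : ψ₂ * (1 / ψ₂) = 1 := by field_simp
    rw [show ((-2:ℝ) - 1 / ψ₂ + 1) = -(1 + 1 / ψ₂) by ring, div_neg, ← neg_div, neg_neg,
      div_mul_div_comm, one_mul]
    rw [div_le_div_iff₀ (by positivity) (by norm_num)]
    nlinarith [ht1, h₂, show (0:ℝ) < 1 / ψ₂ by positivity]
  calc logLaplaceMarginal ψ₁ ψ₂ β ≤ ∫ l in Ioi (0:ℝ), H l := step1
    _ = (∫ l in Ioc (0:ℝ) |β|, H l) + (∫ l in Ioc |β| 1, H l) + (∫ l in Ioi (1:ℝ), H l) := split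
    _ ≤ (1 / ψ₁) * |β| ^ (-1 + 1 / ψ₁)
        + (1 / (2 * ψ₁)) * (∫ l in Ioc |β| 1, l ^ (-2 + 1 / ψ₁)) + 1 / 2 := by
        rw [piece2]; exact add_le_add (add_le_add piece1 le_rfl) piece3

end LLaux

/-- Concentration of the log-Laplace marginal at the origin: as |β| → 0 it is
O(|β|^{−1+1/ψ₁}) if ψ₁ > 1, O(−log|β|) if ψ₁ = 1, and O(1) if ψ₁ < 1,
for any ψ₂ > 0. -/
theorem log_laplace_marginal_concentration (ψ₁ ψ₂ : ℝ)
    (h₁ : 0 < ψ₁) (h₂ : 0 < ψ₂) :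
    (ψ₁ > 1 → (fun β => logLaplaceMarginal ψ₁ ψ₂ β) =O[nhdsWithin 0 {(0 : ℝ)}ᶜ]
        fun β => |β| ^ (-1 + 1 / ψ₁)) ∧
    (ψ₁ = 1 → (fun β => logLaplaceMarginal ψ₁ ψ₂ β) =O[nhdsWithin 0 {(0 : ℝ)}ᶜ]
        fun β => -Real.log |β|) ∧
    (ψ₁ < 1 → (fun β => logLaplaceMarginal ψ₁ ψ₂ β) =O[nhdsWithin 0 {(0 : ℝ)}ᶜ]
        fun _ => (1 : ℝ)) := by
  have hev : ∀ᶠ β in nhdsWithin (0:ℝ) {(0:ℝ)}ᶜ, β ≠ 0 ∧ |β| ≤ 1/2 := by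
    filter_upwards [eventually_mem_nhdsWithin,
      eventually_nhdsWithin_of_eventually_nhds
        (eventually_abs_sub_lt (0:ℝ) (by norm_num : (0:ℝ) < 1/2))] with β hm habs
    refine ⟨hm, ?_⟩
    rw [sub_zero] at habs
    exact habs.le
  refine ⟨?_, ?_, ?_⟩
  · -- ψ₁ > 1
    intro hψ
    have hs1 : 1 / ψ₁ < 1 := by rw [div_lt_one (by positivity)]; linarith
    have hs0 : 0 < 1 / ψ₁ := by positivity
    rw [Asymptotics.isBigO_iff]
    refine ⟨1 / ψ₁ + (1 / (2 * ψ₁)) * (1 / (1 - 1/ψ₁)) + 1/2, ?_⟩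
    filter_upwards [hev] with β hβ
    obtain ⟨hβ0, hβh⟩ := hβ
    have hb : 0 < |β| := abs_pos.2 hβ0
    have hb1 : |β| ≤ 1 := le_trans hβh (by norm_num)
    have hJ : (∫ l in Ioc |β| 1, l ^ ((-2:ℝ) + 1/ψ₁)) ≤ |β| ^ (-1 + 1/ψ₁) / (1 - 1/ψ₁) := by
      rw [← intervalIntegral.integral_of_le hb1,
        integral_rpow (Or.inr ⟨by intro h; linarith,
          by rw [Set.uIcc_of_le hb1]; exact fun h => absurd h.1 (not_le.2 hb)⟩)]
      rw [show ((-2:ℝ) + 1/ψ₁ + 1) = -1 + 1/ψ₁ by ring, Real.one_rpow]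
      have hBn : (0:ℝ) ≤ |β| ^ ((-1:ℝ) + 1/ψ₁) := Real.rpow_nonneg (abs_nonneg β) _
      rw [show ((-1:ℝ) + 1/ψ₁) = -(1 - 1/ψ₁) by ring] at hBn ⊢
      rw [div_neg, ← neg_div, neg_sub]
      exact (div_le_div_iff_of_pos_right (by linarith)).2 (by linarith)
    have hone : (1:ℝ) ≤ |β| ^ ((-1:ℝ) + 1/ψ₁) :=
      Real.one_le_rpow_of_pos_of_le_one_of_nonpos hb hb1 (by linarith)
    have hbound := LLaux.marginal_bound ψ₁ ψ₂ β h₁ h₂ hβ0 hb1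
    rw [Real.norm_eq_abs, Real.norm_eq_abs,
      abs_of_nonneg (LLaux.marginal_nonneg ψ₁ ψ₂ β h₁ h₂),
      abs_of_nonneg (Real.rpow_nonneg (abs_nonneg β) _)]
    have h2ψ : (0:ℝ) < 1 / (2 * ψ₁) := by positivity
    calc logLaplaceMarginal ψ₁ ψ₂ β
        ≤ (1 / ψ₁) * |β| ^ (-1 + 1 / ψ₁)
          + (1 / (2 * ψ₁)) * (∫ l in Ioc |β| 1, l ^ (-2 + 1 / ψ₁)) + 1 / 2 := hbound
      _ ≤ (1 / ψ₁) * |β| ^ (-1 + 1 / ψ₁)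
          + (1 / (2 * ψ₁)) * (|β| ^ (-1 + 1/ψ₁) / (1 - 1/ψ₁)) + (1/2) * |β| ^ (-1 + 1/ψ₁) := by
          have := mul_le_mul_of_nonneg_left hJ h2ψ.le
          have h12 : (1:ℝ)/2 ≤ (1/2) * |β| ^ (-1 + 1/ψ₁) := by nlinarith
          exact add_le_add (add_le_add le_rfl this) h12
      _ = (1 / ψ₁ + (1 / (2 * ψ₁)) * (1 / (1 - 1/ψ₁)) + 1/2) * |β| ^ (-1 + 1/ψ₁) := by
          ring
  · -- ψ₁ = 1
    intro hψ
    subst hψ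
    rw [Asymptotics.isBigO_iff]
    refine ⟨4, ?_⟩
    filter_upwards [hev] with β hβ
    obtain ⟨hβ0, hβh⟩ := hβ
    have hb : 0 < |β| := abs_pos.2 hβ0
    have hb1 : |β| ≤ 1 := le_trans hβh (by norm_num)
    have hlog : (1:ℝ)/2 ≤ -Real.log |β| := by
      have h1 : Real.log |β| ≤ Real.log (1/2) := Real.log_le_log hb hβh
      have h2 : Real.log (1/2) = -Real.log 2 := by
        rw [one_div, Real.log_inv]
      nlinarith [Real.log_two_gt_d9]
    have hJ : (∫ l in Ioc |β| 1, l ^ ((-2:ℝ) + 1/1)) = -Real.log |β| := by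
      have he : ∀ l ∈ Ioc |β| (1:ℝ), l ^ ((-2:ℝ) + 1/1) = l⁻¹ := by
        intro l hl
        norm_num [Real.rpow_neg_one]
      rw [setIntegral_congr_fun measurableSet_Ioc he, ← intervalIntegral.integral_of_le hb1,
        integral_inv_of_pos hb one_pos, show ((1:ℝ)/|β|) = |β|⁻¹ from one_div _, Real.log_inv]
    have hbound := LLaux.marginal_bound 1 ψ₂ β one_pos h₂ hβ0 hb1
    rw [hJ] at hbound
    rw [Real.norm_eq_abs, Real.norm_eq_abs,
      abs_of_nonneg (LLaux.marginal_nonneg 1 ψ₂ β one_pos h₂),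
      abs_of_nonneg (by linarith : (0:ℝ) ≤ -Real.log |β|)]
    have hB : |β| ^ ((-1:ℝ) + 1/1) = 1 := by norm_num
    rw [hB] at hbound
    linarith [hbound, hlog]
  · -- ψ₁ < 1
    intro hψ
    have hs1 : 1 < 1 / ψ₁ := by rw [lt_div_iff₀ h₁]; linarith
    rw [Asymptotics.isBigO_iff]
    refine ⟨1 / ψ₁ + (1 / (2 * ψ₁)) * (1 / (1/ψ₁ - 1)) + 1/2, ?_⟩
    filter_upwards [hev] with β hβ
    obtain ⟨hβ0, hβh⟩ := hβ
    have hb : 0 < |β| := abs_pos.2 hβ0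
    have hb1 : |β| ≤ 1 := le_trans hβh (by norm_num)
    have hr : (-1:ℝ) < -2 + 1/ψ₁ := by linarith
    have hInt : IntegrableOn (fun l : ℝ => l ^ ((-2:ℝ) + 1/ψ₁)) (Ioc 0 1) :=
      (intervalIntegral.intervalIntegrable_rpow' hr).1
    have hJ : (∫ l in Ioc |β| 1, l ^ ((-2:ℝ) + 1/ψ₁)) ≤ 1 / (1/ψ₁ - 1) := by
      have hmono : (∫ l in Ioc |β| 1, l ^ ((-2:ℝ) + 1/ψ₁))
          ≤ ∫ l in Ioc (0:ℝ) 1, l ^ ((-2:ℝ) + 1/ψ₁) := by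
        apply setIntegral_mono_set hInt
        · exact (ae_restrict_iff' measurableSet_Ioc).2 (ae_of_all _ fun l hl =>
            Real.rpow_nonneg hl.1.le _)
        · exact HasSubset.Subset.eventuallyLE (Ioc_subset_Ioc_left hb.le)
      have hval : (∫ l in Ioc (0:ℝ) 1, l ^ ((-2:ℝ) + 1/ψ₁)) = 1 / (1/ψ₁ - 1) := by
        rw [← intervalIntegral.integral_of_le zero_le_one, integral_rpow (Or.inl hr),
          Real.one_rpow, Real.zero_rpow (by linarith : (-2:ℝ) + 1/ψ₁ + 1 ≠ 0)]
        rw [show ((-2:ℝ) + 1/ψ₁ + 1) = 1/ψ₁ - 1 by ring]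
        norm_num
      linarith [hmono, hval.le]
    have hB : |β| ^ ((-1:ℝ) + 1/ψ₁) ≤ 1 :=
      Real.rpow_le_one (abs_nonneg β) hb1 (by linarith)
    have hbound := LLaux.marginal_bound ψ₁ ψ₂ β h₁ h₂ hβ0 hb1
    rw [Real.norm_eq_abs, Real.norm_eq_abs,
      abs_of_nonneg (LLaux.marginal_nonneg ψ₁ ψ₂ β h₁ h₂)]
    have h2ψ : (0:ℝ) < 1 / (2 * ψ₁) := by positivity
    have h1ψ : (0:ℝ) < 1 / ψ₁ := by positivity
    have hJ' := mul_le_mul_of_nonneg_left hJ h2ψ.le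
    have hB' := mul_le_mul_of_nonneg_left hB h1ψ.le
    rw [abs_one, mul_one]
    linarith [hbound, hJ', hB']
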